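/- Let q be an odd positive integer and let ι be an automorphism of ZMod q with ι ∘ ι = id. Let Γ be the semidirect product (ZMod q) ⋊ (ZMod 4) with respect to the homomorphism ZMod 4 → Aut(ZMod q) sending the generator 1 to ι. Then there exists an injective group homomorphism φ : Γ → U(2) = Matrix.unitaryGroup (Fin 2) ℂ such that for every g ∈ Γ with g ≠ 1 and every nonzero vector v ∈ ℂ², we have (φ g) • v ≠ v; in other words, the induced linear action of Γ on the unit sphere of ℂ² is free. -/

import Mathlib

open Multiplicative

section Aux

open Matrix

/-- The quaternion-like generator of order 4 in `U(2)`. -/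
noncomputable def Bm : Matrix (Fin 2) (Fin 2) ℂ := !![0,1;-1,0]

lemma Bm_sq : Bm * Bm = -1 := by
  ext i j; fin_cases i <;> fin_cases j <;> simp [Bm, Matrix.mul_apply, Fin.sum_univ_two]

lemma swap_mul_Bm (x y : ℂ) : diagonal ![y,x] * Bm = Bm * diagonal ![x,y] := by
  ext i j; fin_cases i <;> fin_cases j <;>
    simp [Bm, Matrix.mul_apply, Fin.sum_univ_two]

lemma diag_mul_Bm (x y : ℂ) : diagonal ![x,y] * Bm = !![0,x;-y,0] := by
  ext i j; fin_cases i <;> fin_cases j <;>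
    simp [Bm, Matrix.mul_apply, Fin.sum_univ_two]

lemma Bm_unitary : Bm ∈ Matrix.unitaryGroup (Fin 2) ℂ := by
  rw [Matrix.mem_unitaryGroup_iff]
  ext i j; fin_cases i <;> fin_cases j <;>
    simp [Bm, Matrix.mul_apply, Fin.sum_univ_two, Matrix.conjTranspose_apply, Matrix.one_apply]

lemma diag_unitary (x y : ℂ) (hx : x * star x = 1) (hy : y * star y = 1) :
    diagonal ![x,y] ∈ Matrix.unitaryGroup (Fin 2) ℂ := by
  rw [Matrix.mem_unitaryGroup_iff, Matrix.star_eq_conjTranspose, Matrix.diagonal_conjTranspose,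
    Matrix.diagonal_mul_diagonal]
  ext i j; fin_cases i <;> fin_cases j <;>
    simp [Matrix.diagonal_apply, Matrix.one_apply]
  · simpa using hx
  · simpa using hy

lemma mulVec_two (M : Matrix (Fin 2) (Fin 2) ℂ) (v : Fin 2 → ℂ) (i : Fin 2) :
    (M *ᵥ v) i = M i 0 * v 0 + M i 1 * v 1 := by
  simp [Matrix.mulVec, dotProduct, Fin.sum_univ_two]

end Aux

/-- Let `q` be an odd positive integer and `ι` an automorphism of `ZMod q` with
`ι ∘ ι = id`. Let `Γ` be the semidirect product `(ZMod q) ⋊ (ZMod 4)` with respect to the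
homomorphism `ZMod 4 → Aut(ZMod q)` sending the generator `1` to `ι`. Then there exists an
injective group homomorphism `φ : Γ → U(2)` such that for every `g ≠ 1` in `Γ` and every nonzero
vector `v ∈ ℂ²` we have `(φ g) • v ≠ v`: the induced linear action of `Γ` on the unit sphere of
`ℂ²` is free. -/
theorem semidirect_product_acts_freely_via_U2
    (q : ℕ) (hq : 0 < q) (hodd : Odd q)
    (ι : ZMod q ≃+ ZMod q) (hι : ∀ x : ZMod q, ι (ι x) = x)
    (φ : Multiplicative (ZMod 4) →* MulAut (Multiplicative (ZMod q)))
    (hφ : ∀ x : ZMod q, φ (ofAdd 1) (ofAdd x) = ofAdd (ι x)) :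
    ∃ f : (Multiplicative (ZMod q) ⋊[φ] Multiplicative (ZMod 4)) →*
        Matrix.unitaryGroup (Fin 2) ℂ,
      Function.Injective f ∧
      ∀ g : Multiplicative (ZMod q) ⋊[φ] Multiplicative (ZMod 4), g ≠ 1 →
        ∀ v : Fin 2 → ℂ, v ≠ 0 → Matrix.mulVec (f g : Matrix (Fin 2) (Fin 2) ℂ) v ≠ v := by
  haveI : NeZero q := ⟨hq.ne'⟩
  set U2 := Matrix.unitaryGroup (Fin 2) ℂ with hU2
  -- the multiplier r, with r * r = 1
  set r : ZMod q := ι 1 with hr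
  have hιx : ∀ x : ZMod q, ι x = r * x := by
    intro x
    have h1 : x = x.val • (1 : ZMod q) := by
      simp [nsmul_eq_mul, ZMod.natCast_rightInverse x]
    rw [h1, map_nsmul]
    simp [nsmul_eq_mul, mul_comm]
    rfl
  have hr2 : r * r = 1 := by
    have := hι 1
    rw [hιx, hιx, mul_one] at this
    exact this
  have hrr : ∀ x : ZMod q, r * (r * x) = x := by
    intro x; rw [← mul_assoc, hr2, one_mul]
  have hrne : ∀ a : ZMod q, a ≠ 0 → r * a ≠ 0 := by
    intro a ha h
    exact ha (by rw [← hrr a, h, mul_zero])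
  -- the primitive q-th root of unity and the character e
  obtain ⟨ζ, hζ⟩ : ∃ ζ : ℂ, IsPrimitiveRoot ζ q := ⟨_, Complex.isPrimitiveRoot_exp q hq.ne'⟩
  have hζq : ζ ^ q = 1 := hζ.pow_eq_one
  set e : ZMod q → ℂ := fun x => ζ ^ x.val with he
  have hcongr : ∀ k l : ℕ, (k : ZMod q) = (l : ZMod q) → ζ ^ k = ζ ^ l := by
    intro k l h
    have h2 : k % q = l % q := by
      have := congrArg ZMod.val h
      rwa [ZMod.val_natCast, ZMod.val_natCast] at this
    rw [pow_eq_pow_mod k hζq, pow_eq_pow_mod l hζq, h2]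
  have he_add : ∀ x y : ZMod q, e (x + y) = e x * e y := by
    intro x y
    show ζ ^ (x+y).val = ζ ^ x.val * ζ ^ y.val
    rw [← pow_add]
    apply hcongr
    push_cast [ZMod.natCast_val, ZMod.cast_id]
    rfl
  have he_zero : e 0 = 1 := by simp [he]
  have he_star : ∀ x : ZMod q, e x * star (e x) = 1 := by
    intro x
    have hp : e x ^ q = 1 := by
      show (ζ ^ x.val) ^ q = 1
      rw [← pow_mul, mul_comm, pow_mul, hζq, one_pow]
    have h1 : ‖e x‖ = 1 := Complex.norm_eq_one_of_pow_eq_one hp hq.ne'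
    have h2 : Complex.normSq (e x) = 1 := by
      rw [Complex.normSq_eq_norm_sq, h1, one_pow]
    rw [Complex.star_def, Complex.mul_conj, h2, Complex.ofReal_one]
  have he_one : ∀ a : ZMod q, e a = 1 ↔ a = 0 := by
    intro a
    show ζ ^ a.val = 1 ↔ a = 0
    rw [hζ.pow_eq_one_iff_dvd, ← ZMod.natCast_eq_zero_iff,
      ZMod.natCast_val, ZMod.cast_id]
  have he_neg : ∀ a : ZMod q, e a ≠ -1 := by
    intro a h
    have h2 : ζ ^ (a.val * 2) = 1 := by
      rw [pow_mul]
      show (e a) ^ 2 = 1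
      rw [h]; norm_num
    rw [hζ.pow_eq_one_iff_dvd] at h2
    have hc : Nat.Coprime q 2 := by
      rw [Nat.coprime_two_right]; exact hodd
    have h3 : q ∣ a.val := hc.dvd_of_dvd_mul_right h2
    have h4 : e a = 1 := by
      show ζ ^ a.val = 1
      rw [hζ.pow_eq_one_iff_dvd]; exact h3
    rw [h4] at h; norm_num at h
  -- the generators inside U(2)
  let uB : U2 := ⟨Bm, Bm_unitary⟩
  have huB4 : uB ^ 4 = 1 := by
    apply Subtype.ext
    have h4 : (uB ^ 4 : U2) = (uB * uB) * (uB * uB) := by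
      rw [show (4:ℕ) = 2 * 2 from rfl, pow_mul, pow_two, pow_two]
    rw [h4]
    show ((Bm * Bm) * (Bm * Bm) : Matrix (Fin 2) (Fin 2) ℂ) = 1
    rw [Bm_sq]; norm_num
  -- the two monoid homs
  let F1 : Multiplicative (ZMod q) →* U2 :=
    { toFun := fun a => ⟨Matrix.diagonal ![e a.toAdd, e (r * a.toAdd)],
        diag_unitary _ _ (he_star _) (he_star _)⟩
      map_one' := by
        apply Subtype.ext
        show Matrix.diagonal ![e (toAdd (1 : Multiplicative (ZMod q))),
          e (r * toAdd (1 : Multiplicative (ZMod q)))] = 1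
        have h1 : (![e 0, e (r * 0)] : Fin 2 → ℂ) = fun _ => 1 := by
          funext i; fin_cases i <;> simp [he_zero, mul_zero]
        simp only [toAdd_one, h1, Matrix.diagonal_one]
      map_mul' := by
        intro x y
        apply Subtype.ext
        show Matrix.diagonal ![e (toAdd (x * y)), e (r * toAdd (x * y))]
          = (Matrix.diagonal ![e x.toAdd, e (r * x.toAdd)]) *
            (Matrix.diagonal ![e y.toAdd, e (r * y.toAdd)])
        rw [Matrix.diagonal_mul_diagonal]
        apply congrArg Matrix.diagonal
        funext i; fin_cases i <;>
          simp [toAdd_mul, mul_add, he_add] }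
  let F2 : Multiplicative (ZMod 4) →* U2 :=
    { toFun := fun b => uB ^ (toAdd b).val
      map_one' := by simp
      map_mul' := by
        intro x y
        show uB ^ (toAdd (x * y)).val = uB ^ (toAdd x).val * uB ^ (toAdd y).val
        rw [toAdd_mul, ZMod.val_add, ← pow_eq_pow_mod _ huB4, pow_add] }
  -- compatibility
  have key_pt : ∀ n : Multiplicative (ZMod q), F1 (φ (ofAdd 1) n) * uB = uB * F1 n := by
    intro n
    apply Subtype.ext
    have hn : φ (ofAdd 1) n = ofAdd (ι (toAdd n)) := by
      conv_lhs => rw [← ofAdd_toAdd n]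
      exact hφ _
    show (Matrix.diagonal ![e (toAdd (φ (ofAdd 1) n)), e (r * toAdd (φ (ofAdd 1) n))]) * Bm
        = Bm * Matrix.diagonal ![e (toAdd n), e (r * toAdd n)]
    rw [hn, toAdd_ofAdd, hιx, hrr]
    exact swap_mul_Bm (e (toAdd n)) (e (r * toAdd n))
  have key_iter : ∀ (k : ℕ) (n : Multiplicative (ZMod q)),
      F1 ((φ (ofAdd 1) ^ k) n) * uB ^ k = uB ^ k * F1 n := by
    intro k
    induction k with
    | zero => intro n; simp
    | succ k ih =>
      intro n
      have hap : ((φ (ofAdd 1)) ^ (k+1)) n = ((φ (ofAdd 1)) ^ k) (φ (ofAdd 1) n) := by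
        rw [pow_succ]; rfl
      calc F1 (((φ (ofAdd 1)) ^ (k+1)) n) * uB ^ (k+1)
          = (F1 (((φ (ofAdd 1)) ^ k) (φ (ofAdd 1) n)) * uB ^ k) * uB := by
            rw [hap, pow_succ, mul_assoc]
        _ = (uB ^ k * F1 (φ (ofAdd 1) n)) * uB := by rw [ih _]
        _ = uB ^ k * (F1 (φ (ofAdd 1) n) * uB) := by rw [mul_assoc]
        _ = uB ^ k * (uB * F1 n) := by rw [key_pt n]
        _ = uB ^ (k+1) * F1 n := by rw [pow_succ, mul_assoc]
  have hcompat : ∀ h, F1.comp (φ h).toMonoidHom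
      = (MulAut.conj (F2 h)).toMonoidHom.comp F1 := by
    intro h
    apply MonoidHom.ext
    intro n
    simp only [MonoidHom.comp_apply, MulEquiv.coe_toMonoidHom, MulAut.conj_apply]
    have hk : h = ofAdd (1 : ZMod 4) ^ (toAdd h).val := by
      apply Multiplicative.toAdd.injective
      rw [toAdd_pow, toAdd_ofAdd, nsmul_eq_mul, mul_one]
      exact (ZMod.natCast_rightInverse (toAdd h)).symm
    have hF2 : F2 h = uB ^ (toAdd h).val := rfl
    conv_lhs => rw [hk]
    rw [map_pow, hF2]
    rw [eq_mul_inv_iff_mul_eq]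
    exact key_iter _ n
  -- the homomorphism
  have hfree : ∀ g : Multiplicative (ZMod q) ⋊[φ] Multiplicative (ZMod 4), g ≠ 1 →
      ∀ v : Fin 2 → ℂ, v ≠ 0 →
        Matrix.mulVec ((SemidirectProduct.lift F1 F2 hcompat) g : Matrix (Fin 2) (Fin 2) ℂ) v
          ≠ v := by
    intro g hg v hv hfix
    set a : ZMod q := toAdd g.left with ha
    set k : ℕ := (toAdd g.right).val with hkdef
    have hk4 : k < 4 := ZMod.val_lt _
    have hfg : ((SemidirectProduct.lift F1 F2 hcompat) g : Matrix (Fin 2) (Fin 2) ℂ)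
        = Matrix.diagonal ![e a, e (r * a)] * Bm ^ k := by
      show ((F1 g.left * F2 g.right : U2) : Matrix (Fin 2) (Fin 2) ℂ) = _
      rw [MulMemClass.coe_mul]
      have h2 : ((F2 g.right : U2) : Matrix (Fin 2) (Fin 2) ℂ) = Bm ^ k :=
        SubmonoidClass.coe_pow uB k
      rw [h2]
      rfl
    rw [hfg] at hfix
    -- component equations helper
    have hcomp : ∀ (M : Matrix (Fin 2) (Fin 2) ℂ), Matrix.mulVec M v = v →
        (M 0 0 * v 0 + M 0 1 * v 1 = v 0) ∧ (M 1 0 * v 0 + M 1 1 * v 1 = v 1) := by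
      intro M hM
      constructor
      · have h := congrFun hM 0
        rwa [mulVec_two] at h
      · have h := congrFun hM 1
        rwa [mulVec_two] at h
    have hvne : v 0 = 0 → v 1 = 0 → False := by
      intro h0 h1
      apply hv
      funext i; fin_cases i <;> assumption
    have hDa00 : (Matrix.diagonal ![e a, e (r * a)]) 0 0 = e a := by simp
    have hDa11 : (Matrix.diagonal ![e a, e (r * a)]) 1 1 = e (r * a) := by simp
    interval_cases k
    · -- k = 0 : diagonal matrix, a ≠ 0
      have ha0 : a ≠ 0 := by
        intro h0
        apply hg
        ext
        · show toAdd g.left = toAdd 1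
          rw [← ha, h0, toAdd_one]
        · show toAdd g.right = toAdd 1
          rw [toAdd_one, ← ZMod.val_eq_zero, ← hkdef]
      rw [pow_zero, mul_one] at hfix
      obtain ⟨h0, h1⟩ := hcomp _ hfix
      simp only [Matrix.diagonal_apply_eq, Matrix.diagonal_apply_ne,
        Matrix.cons_val_zero, Matrix.cons_val_one, Matrix.head_cons] at h0 h1
      rw [Matrix.diagonal_apply_ne _ (by decide)] at h0
      rw [Matrix.diagonal_apply_ne _ (by decide)] at h1
      have hv0 : v 0 = 0 := by
        have h' : (e a - 1) * v 0 = 0 := by linear_combination h0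
        rcases mul_eq_zero.mp h' with h | h
        · exact absurd ((he_one a).mp (by linear_combination h)) ha0
        · exact h
      have hv1 : v 1 = 0 := by
        have h' : (e (r * a) - 1) * v 1 = 0 := by linear_combination h1
        rcases mul_eq_zero.mp h' with h | h
        · exact absurd ((he_one _).mp (by linear_combination h)) (hrne a ha0)
        · exact h
      exact hvne hv0 hv1
    · -- k = 1
      rw [pow_one, diag_mul_Bm] at hfix
      obtain ⟨h0, h1⟩ := hcomp _ hfix
      simp only [Matrix.cons_val', Matrix.cons_val_zero, Matrix.cons_val_one,
        Matrix.head_cons, Matrix.head_fin_const, Matrix.cons_val_fin_one, Matrix.empty_val',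
        Matrix.of_apply] at h0 h1
      -- h0 : 0 * v 0 + e a * v 1 = v 0 ; h1 : -e (r*a) * v 0 + 0 * v 1 = v 1
      have hprod : (1 + e (r * a) * e a) * v 1 = 0 := by linear_combination e (r * a) * h0 - h1
      have hne1 : (1 : ℂ) + e (r * a) * e a ≠ 0 := by
        intro hcontra
        apply he_neg (r * a + a)
        rw [he_add]
        linear_combination hcontra
      have hv1 : v 1 = 0 := by
        rcases mul_eq_zero.mp hprod with h | h
        · exact absurd h hne1
        · exact h
      have hv0 : v 0 = 0 := by linear_combination e a * hv1 - h0
      exact hvne hv0 hv1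
    · -- k = 2
      have hB2 : (Bm ^ 2 : Matrix (Fin 2) (Fin 2) ℂ) = -1 := by rw [pow_two, Bm_sq]
      rw [hB2, mul_neg_one] at hfix
      obtain ⟨h0, h1⟩ := hcomp _ hfix
      simp only [Matrix.neg_apply, Matrix.diagonal_apply_eq, Matrix.diagonal_apply_ne,
        Matrix.cons_val_zero, Matrix.cons_val_one, Matrix.head_cons, neg_zero,
        Fin.zero_eq_one_iff, Fin.one_eq_zero_iff, ne_eq, OfNat.ofNat_ne_one,
        not_false_eq_true, zero_mul, add_zero, zero_add] at h0 h1
      have hne0 : e a + 1 ≠ 0 := by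
        intro h
        exact he_neg a (by linear_combination h)
      have hne1 : e (r * a) + 1 ≠ 0 := by
        intro h
        exact he_neg (r * a) (by linear_combination h)
      have hv0 : v 0 = 0 := by
        rcases mul_eq_zero.mp (show (e a + 1) * v 0 = 0 by linear_combination -h0) with h | h
        · exact absurd h hne0
        · exact h
      have hv1 : v 1 = 0 := by
        rcases mul_eq_zero.mp
            (show (e (r * a) + 1) * v 1 = 0 by linear_combination -h1) with h | h
        · exact absurd h hne1
        · exact h
      exact hvne hv0 hv1
    · -- k = 3
      have hB3 : (Bm ^ 3 : Matrix (Fin 2) (Fin 2) ℂ) = -Bm := by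
        rw [pow_succ, pow_two, Bm_sq, neg_one_mul]
      rw [hB3, mul_neg, diag_mul_Bm] at hfix
      obtain ⟨h0, h1⟩ := hcomp _ hfix
      simp only [Matrix.neg_apply, Matrix.cons_val', Matrix.cons_val_zero, Matrix.cons_val_one,
        Matrix.head_cons, Matrix.head_fin_const, Matrix.cons_val_fin_one, Matrix.empty_val',
        Matrix.of_apply, neg_zero, neg_neg, zero_mul, add_zero, zero_add] at h0 h1
      -- h0 : -(e a) * v 1 = v 0 ; h1 : e (r*a) * v 0 = v 1
      have hprod : (1 + e (r * a) * e a) * v 1 = 0 := by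
        linear_combination -h1 - e (r * a) * h0
      have hne1 : (1 : ℂ) + e (r * a) * e a ≠ 0 := by
        intro hcontra
        apply he_neg (r * a + a)
        rw [he_add]
        linear_combination hcontra
      have hv1 : v 1 = 0 := by
        rcases mul_eq_zero.mp hprod with h | h
        · exact absurd h hne1
        · exact h
      have hv0 : v 0 = 0 := by linear_combination -h0 - e a * hv1
      exact hvne hv0 hv1
  refine ⟨SemidirectProduct.lift F1 F2 hcompat, ?_, hfree⟩
  rw [injective_iff_map_eq_one]
  intro g hg1
  by_contra hne
  apply hfree g hne ![1, 0]
  · intro h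
    have := congrFun h 0
    simp at this
  · rw [hg1]
    show Matrix.mulVec ((1 : U2) : Matrix (Fin 2) (Fin 2) ℂ) ![1, 0] = ![1, 0]
    rw [OneMemClass.coe_one, Matrix.one_mulVec]
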